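/- arXiv:0909.1003 — 4 statements merged into one kernel-verified Lean document; each statement's English description precedes it below -/
import Mathlib

section
/- Let λ be the hyperbolic area measure λ(dx dy) = dx dy / y² on the upper half-plane, and let H = {(x,y) : -1/2 < x < 1/2, y > (2/π) tan(π|x|)}. Then for every t ∈ (0,1), λ(H ∩ (H + t)) = log(1/ sin(π t/2)), where H + t denotes the horizontal translate of H by t. -/
open Real MeasureTheory Set

/-- The hyperbolic area measure `dx dy / y²` on the plane (supported on the upper half-plane
via the sets considered). -/
noncomputable def hypMeasure : Measure (ℝ × ℝ) :=
  volume.withDensity (fun p => ENNReal.ofReal (1 / p.2 ^ 2))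

/-- The wedge-shaped region `H`. -/
def wedgeH : Set (ℝ × ℝ) :=
  {p | -(1/2) < p.1 ∧ p.1 < 1/2 ∧ (2 / π) * Real.tan (π * |p.1|) < p.2}

/-- Horizontal translate of a planar set. -/
def htrans (A : Set (ℝ × ℝ)) (t : ℝ) : Set (ℝ × ℝ) := {p | (p.1 - t, p.2) ∈ A}

lemma measurable_tan' : Measurable Real.tan := by
  have : Real.tan = fun x => Real.sin x / Real.cos x := funext fun x => Real.tan_eq_sin_div_cos x
  rw [this]; exact Real.measurable_sin.div Real.measurable_cos

lemma inner_int {c : ℝ} (hc : 0 < c) :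
    ∫⁻ y in Set.Ioi c, ENNReal.ofReal (1 / y ^ 2) = ENNReal.ofReal (1 / c) := by
  have key : EqOn (fun y : ℝ => y ^ (-2:ℝ)) (fun y : ℝ => 1 / y ^ 2) (Ioi c) := by
    intro x hx
    have hx0 : 0 < x := hc.trans hx
    simp only
    rw [show (-2:ℝ) = -((2:ℕ):ℝ) by norm_num, Real.rpow_neg hx0.le, Real.rpow_natCast, one_div]
  have hint : IntegrableOn (fun y : ℝ => 1 / y ^ 2) (Ioi c) :=
    (integrableOn_Ioi_rpow_of_lt (by norm_num) hc).congr_fun key measurableSet_Ioi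
  have hnn : 0 ≤ᵐ[volume.restrict (Ioi c)] fun y : ℝ => 1 / y ^ 2 :=
    Filter.Eventually.of_forall fun y => by positivity
  rw [← MeasureTheory.ofReal_integral_eq_lintegral_ofReal hint hnn]
  congr 1
  calc ∫ y in Ioi c, 1 / y ^ 2 = ∫ y in Ioi c, y ^ (-2:ℝ) :=
        (setIntegral_congr_fun measurableSet_Ioi key).symm
    _ = -c ^ ((-2:ℝ) + 1) / ((-2:ℝ) + 1) := integral_Ioi_rpow_of_lt (by norm_num) hc
    _ = 1 / c := by
        rw [show (-2:ℝ) + 1 = -1 by norm_num, Real.rpow_neg_one]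
        field_simp

lemma master (a b : ℝ) (hab : a < b) (f r F : ℝ → ℝ) (hm : Measurable f)
    (hf : ∀ x ∈ Set.Ioo a b, 0 < f x)
    (hr : ∀ x ∈ Set.Ioo a b, r x = 1 / f x)
    (hrc : ContinuousOn r (Set.Icc a b))
    (hF : ∀ x ∈ Set.Icc a b, HasDerivAt F (r x) x) :
    hypMeasure {p : ℝ × ℝ | p.1 ∈ Set.Ioo a b ∧ f p.1 < p.2}
      = ENNReal.ofReal (F b - F a) := by
  set S : Set (ℝ × ℝ) := {p | p.1 ∈ Set.Ioo a b ∧ f p.1 < p.2} with hSdef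
  have hS : MeasurableSet S := by
    have : S = (Prod.fst ⁻¹' Ioo a b) ∩ {p : ℝ × ℝ | f p.1 < p.2} := rfl
    rw [this]
    exact (measurableSet_Ioo.preimage measurable_fst).inter
      (measurableSet_lt (hm.comp measurable_fst) measurable_snd)
  have step1 : hypMeasure S = ∫⁻ p in S, ENNReal.ofReal (1 / p.2 ^ 2) :=
    withDensity_apply _ hS
  have hdens : Measurable fun p : ℝ × ℝ => ENNReal.ofReal (1 / p.2 ^ 2) :=
    ((measurable_snd.pow_const 2).const_div 1).ennreal_ofReal
  rw [step1, ← lintegral_indicator hS _, Measure.volume_eq_prod,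
    MeasureTheory.lintegral_prod _ ((hdens.indicator hS).aemeasurable)]
  have hin : ∀ x : ℝ, (∫⁻ y, S.indicator (fun p : ℝ × ℝ => ENNReal.ofReal (1 / p.2 ^ 2)) (x, y))
      = (Ioo a b).indicator (fun x => ENNReal.ofReal (1 / f x)) x := by
    intro x
    by_cases hx : x ∈ Ioo a b
    · rw [indicator_of_mem hx]
      have h2 : ∀ y : ℝ, S.indicator (fun p : ℝ × ℝ => ENNReal.ofReal (1 / p.2 ^ 2)) (x, y)
          = (Ioi (f x)).indicator (fun y : ℝ => ENNReal.ofReal (1 / y ^ 2)) y := by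
        intro y
        by_cases hy : f x < y
        · rw [indicator_of_mem (show (x, y) ∈ S from ⟨hx, hy⟩), indicator_of_mem (show y ∈ Ioi (f x) from hy)]
        · rw [indicator_of_notMem (fun h => hy (hSdef ▸ h).2), indicator_of_notMem (show y ∉ Ioi (f x) from hy)]
      simp_rw [h2]
      rw [lintegral_indicator measurableSet_Ioi _]
      exact inner_int (hf x hx)
    · rw [indicator_of_notMem hx]
      have h2 : ∀ y : ℝ, S.indicator (fun p : ℝ × ℝ => ENNReal.ofReal (1 / p.2 ^ 2)) (x, y) = 0 :=
        fun y => indicator_of_notMem (fun h => hx (hSdef ▸ h).1) _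
      simp_rw [h2]
      exact lintegral_zero
  simp_rw [hin]
  rw [lintegral_indicator measurableSet_Ioo _]
  have hcg : ∫⁻ x in Ioo a b, ENNReal.ofReal (1 / f x) = ∫⁻ x in Ioo a b, ENNReal.ofReal (r x) :=
    setLIntegral_congr_fun measurableSet_Ioo (fun x hx => by
      rw [hr x hx])
  rw [hcg]
  have hcont : IntegrableOn r (Ioo a b) :=
    (hrc.integrableOn_Icc).mono_set Ioo_subset_Icc_self
  have hnn : 0 ≤ᵐ[volume.restrict (Ioo a b)] r :=
    (ae_restrict_iff' measurableSet_Ioo).2 (Filter.Eventually.of_forall fun x hx =>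
      le_of_lt (by rw [hr x hx]; exact one_div_pos.2 (hf x hx)))
  rw [← MeasureTheory.ofReal_integral_eq_lintegral_ofReal hcont hnn]
  congr 1
  have e1 : ∫ x in Ioo a b, r x = ∫ x in a..b, r x := by
    rw [intervalIntegral.integral_of_le hab.le, MeasureTheory.integral_Ioc_eq_integral_Ioo]
  rw [e1]
  exact intervalIntegral.integral_eq_sub_of_hasDerivAt
    (fun x hx => hF x ((uIcc_of_le hab.le) ▸ hx))
    (hrc.intervalIntegrable_of_Icc hab.le)

lemma null_line (c : ℝ) : hypMeasure {p : ℝ × ℝ | p.1 = c} = 0 := by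
  have hv : (volume : Measure (ℝ × ℝ)) {p : ℝ × ℝ | p.1 = c} = 0 := by
    have : {p : ℝ × ℝ | p.1 = c} = ({c} : Set ℝ) ×ˢ (univ : Set ℝ) := by
      ext ⟨a, b⟩; simp [Set.mem_prod, eq_comm]
    rw [this, Measure.volume_eq_prod, Measure.prod_prod]
    simp
  exact (withDensity_absolutelyContinuous _ _) hv

lemma decomp (t : ℝ) (ht0 : 0 < t) (ht1 : t < 1) :
    wedgeH ∩ htrans wedgeH t =
      ({p : ℝ × ℝ | p.1 ∈ Set.Ioo (t - 1/2) (t/2) ∧ (2/π) * Real.tan (π * (t - p.1)) < p.2}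
        ∪ {p : ℝ × ℝ | p.1 ∈ Set.Ioo (t/2) (1/2) ∧ (2/π) * Real.tan (π * p.1) < p.2})
      ∪ ((wedgeH ∩ htrans wedgeH t) ∩ {p : ℝ × ℝ | p.1 = t/2}) := by
  have hpi : (0:ℝ) < π := Real.pi_pos
  have h2pi : (0:ℝ) < 2/π := by positivity
  ext ⟨x, y⟩
  simp only [wedgeH, htrans, Set.mem_inter_iff, Set.mem_union, Set.mem_setOf_eq, Set.mem_Ioo]
  constructor
  · rintro ⟨⟨h1, h2, h3⟩, h4, h5, h6⟩
    rcases lt_trichotomy x (t/2) with hx | hx | hx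
    · left; left
      refine ⟨⟨by linarith, hx⟩, ?_⟩
      have : |x - t| = t - x := by rw [abs_of_neg (by linarith)]; ring
      rw [this] at h6
      exact h6
    · right; exact ⟨⟨⟨h1, h2, h3⟩, h4, h5, h6⟩, hx⟩
    · left; right
      refine ⟨⟨hx, h2⟩, ?_⟩
      have : |x| = x := abs_of_pos (by linarith)
      rw [this] at h3
      exact h3
  · rintro ((⟨⟨hx1, hx2⟩, hy⟩ | ⟨⟨hx1, hx2⟩, hy⟩) | ⟨h, _⟩)
    · have habs : |x| < t - x := by
        rcases le_or_gt 0 x with h0 | h0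
        · rw [abs_of_nonneg h0]; linarith
        · rw [abs_of_neg h0]; linarith
      have htx : t - x < 1/2 := by linarith
      have htan : Real.tan (π * |x|) < Real.tan (π * (t - x)) := by
        apply Real.tan_lt_tan_of_nonneg_of_lt_pi_div_two
          (by positivity) (by nlinarith) (by nlinarith [abs_nonneg x])
      have h3 : (2/π) * Real.tan (π * |x|) < y :=
        lt_trans (by nlinarith) hy
      have h6 : (2/π) * Real.tan (π * |x - t|) < y := by
        have : |x - t| = t - x := by rw [abs_of_neg (by linarith)]; ring
        rw [this]; exact hy
      exact ⟨⟨by linarith, by linarith, h3⟩, by linarith, by linarith, h6⟩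
    · have hx0 : 0 < x := by linarith
      have habs : |x - t| < x := by
        rcases le_or_gt t x with h0 | h0
        · rw [abs_of_nonneg (by linarith)]; linarith
        · rw [abs_of_neg (by linarith)]; linarith
      have htan : Real.tan (π * |x - t|) < Real.tan (π * x) := by
        apply Real.tan_lt_tan_of_nonneg_of_lt_pi_div_two
          (by positivity) (by nlinarith) (by nlinarith [abs_nonneg (x - t)])
      have h3 : (2/π) * Real.tan (π * |x|) < y := by
        rw [abs_of_pos hx0]; exact hy
      have h6 : (2/π) * Real.tan (π * |x - t|) < y :=
        lt_trans (by nlinarith) hy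
      exact ⟨⟨by linarith, hx2, h3⟩, by linarith, by linarith, h6⟩
    · exact h

lemma piece2 (t : ℝ) (ht0 : 0 < t) (ht1 : t < 1) :
    hypMeasure {p : ℝ × ℝ | p.1 ∈ Set.Ioo (t/2) (1/2) ∧ (2/π) * Real.tan (π * p.1) < p.2}
      = ENNReal.ofReal (-((1/2) * Real.log (Real.sin (π * t / 2)))) := by
  have hpi : (0:ℝ) < π := Real.pi_pos
  have hsin : ∀ x ∈ Set.Icc (t/2) (1/2 : ℝ), 0 < Real.sin (π * x) := by
    intro x hx
    apply Real.sin_pos_of_pos_of_lt_pi (by nlinarith [hx.1]) (by nlinarith [hx.2])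
  refine Eq.trans (master (t/2) (1/2) (by linarith)
    (fun x => (2/π) * Real.tan (π * x))
    (fun x => (π/2) * (Real.cos (π * x) / Real.sin (π * x)))
    (fun x => (1/2) * Real.log (Real.sin (π * x)))
    (measurable_const.mul (measurable_tan'.comp (measurable_id.const_mul π)))
    ?_ ?_ ?_ ?_) ?_
  · intro x hx
    have : 0 < Real.tan (π * x) :=
      Real.tan_pos_of_pos_of_lt_pi_div_two (by nlinarith [hx.1]) (by nlinarith [hx.2])
    positivity
  · intro x hx
    have hcos : 0 < Real.cos (π * x) :=
      Real.cos_pos_of_mem_Ioo ⟨by nlinarith [hx.1], by nlinarith [hx.2]⟩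
    have hs : 0 < Real.sin (π * x) :=
      Real.sin_pos_of_pos_of_lt_pi (by nlinarith [hx.1]) (by nlinarith [hx.2])
    beta_reduce
    rw [Real.tan_eq_sin_div_cos]
    field_simp
  · exact continuousOn_const.mul
      (((Real.continuous_cos.comp (continuous_const.mul continuous_id)).continuousOn).div
        ((Real.continuous_sin.comp (continuous_const.mul continuous_id)).continuousOn)
        (fun x hx => (hsin x hx).ne'))
  · intro x hx
    have hs : 0 < Real.sin (π * x) := hsin x hx
    have hlin : HasDerivAt (fun x : ℝ => π * x) π x := by
      simpa using (hasDerivAt_id x).const_mul π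
    have hsin' : HasDerivAt (fun x : ℝ => Real.sin (π * x)) (Real.cos (π * x) * π) x :=
      (Real.hasDerivAt_sin (π * x)).comp x hlin
    have hlog := (Real.hasDerivAt_log hs.ne').comp x hsin'
    have := hlog.const_mul (1/2 : ℝ)
    refine this.congr_deriv ?_
    ring
  · congr 1
    beta_reduce
    have e1 : π * (1/2 : ℝ) = π/2 := by ring
    have e2 : π * (t/2) = π * t / 2 := by ring
    rw [e1, e2, Real.sin_pi_div_two, Real.log_one]
    ring

lemma piece1 (t : ℝ) (ht0 : 0 < t) (ht1 : t < 1) :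
    hypMeasure {p : ℝ × ℝ | p.1 ∈ Set.Ioo (t - 1/2) (t/2) ∧ (2/π) * Real.tan (π * (t - p.1)) < p.2}
      = ENNReal.ofReal (-((1/2) * Real.log (Real.sin (π * t / 2)))) := by
  have hpi : (0:ℝ) < π := Real.pi_pos
  have hsin : ∀ x ∈ Set.Icc (t - 1/2) (t/2 : ℝ), 0 < Real.sin (π * (t - x)) := by
    intro x hx
    apply Real.sin_pos_of_pos_of_lt_pi (by nlinarith [hx.2]) (by nlinarith [hx.1])
  refine Eq.trans (master (t - 1/2) (t/2) (by linarith)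
    (fun x => (2/π) * Real.tan (π * (t - x)))
    (fun x => (π/2) * (Real.cos (π * (t - x)) / Real.sin (π * (t - x))))
    (fun x => -((1/2) * Real.log (Real.sin (π * (t - x)))))
    (measurable_const.mul (measurable_tan'.comp ((measurable_const.sub measurable_id).const_mul π)))
    ?_ ?_ ?_ ?_) ?_
  · intro x hx
    have : 0 < Real.tan (π * (t - x)) :=
      Real.tan_pos_of_pos_of_lt_pi_div_two (by nlinarith [hx.2]) (by nlinarith [hx.1])
    positivity
  · intro x hx
    have hcos : 0 < Real.cos (π * (t - x)) :=
      Real.cos_pos_of_mem_Ioo ⟨by nlinarith [hx.2], by nlinarith [hx.1]⟩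
    have hs : 0 < Real.sin (π * (t - x)) :=
      Real.sin_pos_of_pos_of_lt_pi (by nlinarith [hx.2]) (by nlinarith [hx.1])
    beta_reduce
    rw [Real.tan_eq_sin_div_cos]
    field_simp
  · exact continuousOn_const.mul
      (((Real.continuous_cos.comp (continuous_const.mul (continuous_const.sub continuous_id))).continuousOn).div
        ((Real.continuous_sin.comp (continuous_const.mul (continuous_const.sub continuous_id))).continuousOn)
        (fun x hx => (hsin x hx).ne'))
  · intro x hx
    have hs : 0 < Real.sin (π * (t - x)) := hsin x hx
    have hlin : HasDerivAt (fun x : ℝ => π * (t - x)) (π * (-1)) x :=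
      ((hasDerivAt_id x).const_sub t).const_mul π
    have hsin' : HasDerivAt (fun x : ℝ => Real.sin (π * (t - x)))
        (Real.cos (π * (t - x)) * (π * (-1))) x :=
      by have := (Real.hasDerivAt_sin (π * (t - x))).comp x hlin; exact this
    have hlog := (Real.hasDerivAt_log hs.ne').comp x hsin'
    have := (hlog.const_mul (1/2 : ℝ)).neg
    refine this.congr_deriv ?_
    ring
  · congr 1
    beta_reduce
    have e1 : π * (t - (t - 1/2)) = π/2 := by ring
    have e2 : π * (t - t/2) = π * t / 2 := by ring
    rw [e1, e2, Real.sin_pi_div_two, Real.log_one]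
    ring

/-- For `t ∈ (0,1)`, `λ(H ∩ (H + t)) = log (1 / sin (π t / 2))`. -/
theorem hyp_area_wedge_inter_translate (t : ℝ) (ht0 : 0 < t) (ht1 : t < 1) :
    hypMeasure (wedgeH ∩ htrans wedgeH t)
      = ENNReal.ofReal (Real.log (1 / Real.sin (π * t / 2))) := by
  have hpi : (0:ℝ) < π := Real.pi_pos
  set S1 : Set (ℝ × ℝ) :=
    {p : ℝ × ℝ | p.1 ∈ Set.Ioo (t - 1/2) (t/2) ∧ (2/π) * Real.tan (π * (t - p.1)) < p.2}
  set S2 : Set (ℝ × ℝ) :=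
    {p : ℝ × ℝ | p.1 ∈ Set.Ioo (t/2) (1/2) ∧ (2/π) * Real.tan (π * p.1) < p.2}
  have hnull : hypMeasure ((wedgeH ∩ htrans wedgeH t) ∩ {p : ℝ × ℝ | p.1 = t/2}) = 0 :=
    measure_mono_null Set.inter_subset_right (null_line (t/2))
  have hmeas2 : MeasurableSet S2 := by
    have : S2 = (Prod.fst ⁻¹' Set.Ioo (t/2) (1/2)) ∩
        {p : ℝ × ℝ | (2/π) * Real.tan (π * p.1) < p.2} := rfl
    rw [this]
    exact (measurableSet_Ioo.preimage measurable_fst).inter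
      (measurableSet_lt ((measurable_const.mul
        (measurable_tan'.comp (measurable_id.const_mul π))).comp measurable_fst) measurable_snd)
  have hdisj : Disjoint S1 S2 := by
    rw [Set.disjoint_left]
    rintro p ⟨⟨_, h1⟩, _⟩ ⟨⟨h2, _⟩, _⟩
    exact absurd h1 (not_lt.2 h2.le)
  rw [decomp t ht0 ht1]
  have e0 : hypMeasure ((S1 ∪ S2) ∪ ((wedgeH ∩ htrans wedgeH t) ∩ {p : ℝ × ℝ | p.1 = t/2}))
      = hypMeasure (S1 ∪ S2) :=
    le_antisymm ((measure_union_le _ _).trans (by rw [hnull, add_zero]))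
      (measure_mono Set.subset_union_left)
  rw [e0, measure_union hdisj hmeas2, piece1 t ht0 ht1, piece2 t ht0 ht1]
  have hs0 : 0 < Real.sin (π * t / 2) :=
    Real.sin_pos_of_pos_of_lt_pi (by nlinarith) (by nlinarith)
  have hX : (0:ℝ) ≤ -((1/2) * Real.log (Real.sin (π * t / 2))) := by
    have := Real.log_nonpos hs0.le (Real.sin_le_one _)
    linarith
  rw [← ENNReal.ofReal_add hX hX]
  congr 1
  rw [show (1:ℝ) / Real.sin (π * t / 2) = (Real.sin (π * t / 2))⁻¹ from one_div _, Real.log_inv]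
  ring
end

section
/- Let h : ℝ → ℝ be an increasing homeomorphism, I = [a, b] with halves I₁, I₂, τ and δ(I) as above. Then (1/|I|)∫_I (h(t) - h(a)) dt ≤ (3δ(I)/(1+3δ(I))) · (h(b) - h(a)). -/
/-- Let `h` be an increasing homeomorphism of `ℝ`, `I = [a, b]` with halves `I₁, I₂`,
`τ(J) = h(sup J) - h(inf J)` and `δ = τ(I₁)/τ(I₂) + τ(I₂)/τ(I₁)`. Then
`(1/|I|) ∫_I (h(t) - h(a)) dt ≤ (3δ/(1+3δ)) (h(b) - h(a))`. -/
theorem average_integral_bound (h : ℝ → ℝ) (hmono : StrictMono h)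
    (hcont : Continuous h) (hsurj : Function.Surjective h)
    (a b : ℝ) (hab : a < b) :
    let m := (a + b) / 2
    let δ := (h m - h a) / (h b - h m) + (h b - h m) / (h m - h a)
    (1 / (b - a)) * ∫ t in a..b, (h t - h a)
      ≤ (3 * δ / (1 + 3 * δ)) * (h b - h a) := by
  intro m δ
  have ham : a < m := by unfold m; linarith
  have hmb : m < b := by unfold m; linarith
  set τ₁ := h m - h a with hτ₁
  set τ₂ := h b - h m with hτ₂
  have hτ₁pos : 0 < τ₁ := sub_pos.mpr (hmono ham)
  have hτ₂pos : 0 < τ₂ := sub_pos.mpr (hmono hmb)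
  have hδ : δ = τ₁ / τ₂ + τ₂ / τ₁ := rfl
  have hδ2 : 2 ≤ δ := by
    rw [hδ, div_add_div _ _ (ne_of_gt hτ₂pos) (ne_of_gt hτ₁pos),
      le_div_iff₀ (by positivity)]
    nlinarith [sq_nonneg (τ₁ - τ₂)]
  have hkey : τ₁ ≤ δ * τ₂ := by
    rw [hδ]
    rw [← sub_nonneg]
    have : (τ₁ / τ₂ + τ₂ / τ₁) * τ₂ - τ₁ = τ₂ ^ 2 / τ₁ := by
      field_simp; ring
    rw [this]; positivity
  -- integrability
  have hint : ∀ c d : ℝ, IntervalIntegrable (fun t => h t - h a) MeasureTheory.volume c d :=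
    fun c d => (hcont.sub continuous_const).intervalIntegrable c d
  have hsplit : (∫ t in a..b, (h t - h a))
      = (∫ t in a..m, (h t - h a)) + ∫ t in m..b, (h t - h a) :=
    (intervalIntegral.integral_add_adjacent_intervals (hint a m) (hint m b)).symm
  have hI1 : (∫ t in a..m, (h t - h a)) ≤ (m - a) * τ₁ := by
    have : (∫ t in a..m, (h t - h a)) ≤ ∫ t in a..m, τ₁ := by
      apply intervalIntegral.integral_mono_on ham.le (hint a m)
        (intervalIntegrable_const)
      intro t ht
      have := hmono.monotone ht.2
      simp only [hτ₁]; linarith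
    rw [intervalIntegral.integral_const, smul_eq_mul] at this
    unfold τ₁; unfold τ₁ at this; nlinarith
  have hI2 : (∫ t in m..b, (h t - h a)) ≤ (b - m) * (τ₁ + τ₂) := by
    have : (∫ t in m..b, (h t - h a)) ≤ ∫ t in m..b, (τ₁ + τ₂) := by
      apply intervalIntegral.integral_mono_on hmb.le (hint m b)
        (intervalIntegrable_const)
      intro t ht
      have := hmono.monotone ht.2
      simp only [hτ₁, hτ₂]; linarith
    rw [intervalIntegral.integral_const, smul_eq_mul] at this
    unfold τ₁ τ₂; unfold τ₁ τ₂ at this; nlinarith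
  have hma : m - a = (b - a) / 2 := by unfold m; ring
  have hbm : b - m = (b - a) / 2 := by unfold m; ring
  have hba : 0 < b - a := by linarith
  have htot : (∫ t in a..b, (h t - h a)) ≤ (b - a) / 2 * (2 * τ₁ + τ₂) := by
    rw [hsplit]
    calc _ ≤ (m - a) * τ₁ + (b - m) * (τ₁ + τ₂) := add_le_add hI1 hI2
      _ = (b - a) / 2 * (2 * τ₁ + τ₂) := by rw [hma, hbm]; ring
  have hhb : h b - h a = τ₁ + τ₂ := by simp [hτ₁, hτ₂]
  rw [hhb]
  have hstep : (1 / (b - a)) * ∫ t in a..b, (h t - h a) ≤ (2 * τ₁ + τ₂) / 2 := by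
    calc (1 / (b - a)) * ∫ t in a..b, (h t - h a)
        ≤ (1 / (b - a)) * ((b - a) / 2 * (2 * τ₁ + τ₂)) := by
          apply mul_le_mul_of_nonneg_left htot (by positivity)
      _ = (2 * τ₁ + τ₂) / 2 := by field_simp
  refine hstep.trans ?_
  have h1 : (0:ℝ) < 1 + 3 * δ := by linarith
  rw [div_mul_eq_mul_div, div_le_div_iff₀ two_pos h1]
  nlinarith [mul_le_mul_of_nonneg_right hkey hτ₂pos.le, hτ₂pos, hδ2]
end

section
/- Let L, c > 0 and suppose Ψ : (0,∞) → [0,1] is nonincreasing, satisfies Ψ(s²) ≤ c/s + Ψ(s)² for all s > 0, and Ψ(s₀) ≤ 1/2 for some s₀ ≥ max(1, (2c)²). Then there exist constants C, δ > 0 such that Ψ(s) ≤ C s^{-δ} for all s > 0. -/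
/-- Functional inequality: if `Ψ : (0,∞) → [0,1]` is nonincreasing, satisfies
`Ψ(s²) ≤ c/s + Ψ(s)²` for all `s > 0`, and `Ψ(s₀) ≤ 1/2` for some
`s₀ ≥ max 1 (2c)²`, then `Ψ(s) ≤ C s^(-δ)` for some `C, δ > 0`. -/
theorem functional_inequality_power_decay (c : ℝ) (hc : 0 < c) (Ψ : ℝ → ℝ)
    (hrange : ∀ s : ℝ, 0 < s → Ψ s ∈ Set.Icc (0:ℝ) 1)
    (hmono : ∀ s t : ℝ, 0 < s → s ≤ t → Ψ t ≤ Ψ s)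
    (hineq : ∀ s : ℝ, 0 < s → Ψ (s ^ 2) ≤ c / s + (Ψ s) ^ 2)
    (s₀ : ℝ) (hs₀ : max 1 ((2 * c) ^ 2) ≤ s₀) (hΨs₀ : Ψ s₀ ≤ 1 / 2) :
    ∃ C δ : ℝ, 0 < C ∧ 0 < δ ∧ ∀ s : ℝ, 0 < s → Ψ s ≤ C * s ^ (-δ) := by
  set S : ℝ := max s₀ (max (11 * c) 2) with hSdef
  have hs₀1 : (1:ℝ) ≤ s₀ := le_trans (le_max_left _ _) hs₀
  have hS2 : (2:ℝ) ≤ S := le_trans (le_max_right _ _) (le_max_right _ _)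
  have hSc : 11 * c ≤ S := le_trans (le_max_left _ _) (le_max_right _ _)
  have hSs₀ : s₀ ≤ S := le_max_left _ _
  have hS1 : (1:ℝ) < S := lt_of_lt_of_le one_lt_two hS2
  have hS0 : (0:ℝ) < S := lt_trans one_pos hS1
  set r : ℝ := Real.sqrt (1/2) with hrdef
  have hr0 : 0 < r := Real.sqrt_pos.mpr (by norm_num)
  have hr2 : r ^ 2 = 1/2 := Real.sq_sqrt (by norm_num)
  have hr23 : (2:ℝ)/3 ≤ r := by
    by_contra h
    push_neg at h
    nlinarith
  have key : ∀ k : ℕ, Ψ (S ^ (2 ^ k)) ≤ 3/4 * r ^ (2 ^ k) := by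
    intro k
    induction k with
    | zero =>
      simp only [pow_zero, pow_one]
      have h1 : Ψ S ≤ Ψ s₀ := hmono s₀ S (lt_of_lt_of_le one_pos hs₀1) hSs₀
      linarith
    | succ k ih =>
      have hSk : (0:ℝ) < S ^ (2^k) := pow_pos hS0 _
      have h1 := hineq (S ^ (2^k)) hSk
      have h2 : (S ^ (2^k)) ^ 2 = S ^ (2^(k+1)) := by
        rw [← pow_mul, ← pow_succ]
      rw [h2] at h1
      have hΨk0 : 0 ≤ Ψ (S ^ (2^k)) := (hrange _ hSk).1
      have h3 : Ψ (S ^ (2^k)) ^ 2 ≤ (3/4 * r ^ (2^k))^2 :=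
        pow_le_pow_left₀ hΨk0 ih 2
      have hrk2 : (r ^ (2^k))^2 = r ^ (2^(k+1)) := by rw [← pow_mul, ← pow_succ]
      have e1 : r ^ (2^(k+1)) = ((1:ℝ)/2) ^ (2^k) := by
        have h21 : 2^(k+1) = 2 * 2^k := by ring
        rw [h21, pow_mul, hr2]
      have h4 : c / S ^ (2^k) ≤ 3/16 * r ^ (2^(k+1)) := by
        rw [div_le_iff₀ hSk, e1]
        have e2 : 3/16 * ((1:ℝ)/2)^(2^k) * S^(2^k) = 3/16 * (S/2)^(2^k) := by
          rw [mul_assoc, ← mul_pow]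
          ring_nf
        rw [e2]
        have hpow : S/2 ≤ (S/2)^(2^k) :=
          le_self_pow₀ (by linarith) (Nat.pos_of_ne_zero (by positivity)).ne'
        nlinarith
      nlinarith [h1, h3, h4, hrk2]
  have hlogS : 0 < Real.log S := Real.log_pos hS1
  have hlog2 : 0 < Real.log 2 := Real.log_pos one_lt_two
  set δ : ℝ := Real.log 2 / (4 * Real.log S) with hδdef
  have hδ0 : 0 < δ := div_pos hlog2 (by linarith)
  have hC1 : (1:ℝ) ≤ S ^ δ := by
    calc (1:ℝ) = S ^ (0:ℝ) := (Real.rpow_zero S).symm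
    _ ≤ S ^ δ := Real.rpow_le_rpow_of_exponent_le hS1.le hδ0.le
  refine ⟨S ^ δ, δ, Real.rpow_pos_of_pos hS0 δ, hδ0, ?_⟩
  intro s hs
  by_cases hsS : s < S
  · have h1 : Ψ s ≤ 1 := (hrange s hs).2
    have h2 : S ^ (-δ) ≤ s ^ (-δ) := by
      rw [Real.rpow_neg hS0.le, Real.rpow_neg hs.le]
      exact inv_anti₀ (Real.rpow_pos_of_pos hs δ)
        (Real.rpow_le_rpow hs.le hsS.le hδ0.le)
    calc Ψ s ≤ 1 := h1
      _ = S ^ δ * S ^ (-δ) := by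
          rw [← Real.rpow_add hS0, add_neg_cancel, Real.rpow_zero]
      _ ≤ S ^ δ * s ^ (-δ) :=
          mul_le_mul_of_nonneg_left h2 (Real.rpow_pos_of_pos hS0 δ).le
  · push_neg at hsS
    set t : ℝ := Real.logb S s with htdef
    have hts : S ^ t = s := Real.rpow_logb hS0 (ne_of_gt hS1) hs
    have ht1 : 1 ≤ t := by
      rw [htdef, Real.le_logb_iff_rpow_le hS1 hs, Real.rpow_one]
      exact hsS
    set n : ℕ := ⌊t⌋₊ with hndef
    have hn1 : 1 ≤ n := Nat.le_floor (by exact_mod_cast ht1)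
    set k : ℕ := Nat.log 2 n with hkdef
    have hk1 : 2^k ≤ n := Nat.pow_log_le_self 2 (by omega)
    have hk2 : n < 2^(k+1) := Nat.lt_pow_succ_log_self (by norm_num) n
    have hkt : ((2:ℝ)^k : ℝ) ≤ t := by
      calc ((2:ℝ)^k : ℝ) ≤ (n:ℝ) := by exact_mod_cast hk1
      _ ≤ t := Nat.floor_le (by linarith)
    have htk : t < 2 * 2^k := by
      have : t < (n:ℝ) + 1 := Nat.lt_floor_add_one t
      have h5 : ((n:ℝ)) + 1 ≤ ((2:ℝ)^(k+1)) := by exact_mod_cast hk2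
      calc t < (n:ℝ) + 1 := Nat.lt_floor_add_one t
      _ ≤ (2:ℝ)^(k+1) := h5
      _ = 2 * 2^k := by ring
    have hSkle : S ^ (2^k : ℕ) ≤ s := by
      have hcast : ((2^k : ℕ) : ℝ) ≤ t := by exact_mod_cast hkt
      have h6 : S ^ ((2^k : ℕ) : ℝ) ≤ S ^ t :=
        Real.rpow_le_rpow_of_exponent_le hS1.le hcast
      rwa [Real.rpow_natCast, hts] at h6
    have hΨle : Ψ s ≤ 3/4 * r ^ (2^k) :=
      le_trans (hmono _ s (pow_pos hS0 _) hSkle) (key k)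
    have hlogr : Real.log r = -(Real.log 2)/2 := by
      rw [hrdef, Real.log_sqrt (by norm_num)]
      rw [one_div, Real.log_inv]
    have hrs : r ^ (2^k : ℕ) ≤ s ^ (-δ) := by
      have hr_rpow : r ^ (2^k : ℕ) = Real.exp (Real.log r * (2^k : ℕ)) := by
        rw [← Real.rpow_natCast r (2^k), Real.rpow_def_of_pos hr0]
      have hs_rpow : s ^ (-δ) = Real.exp (Real.log s * (-δ)) := by
        rw [Real.rpow_def_of_pos hs]
      rw [hr_rpow, hs_rpow]
      apply Real.exp_le_exp.mpr
      have hlogs : Real.log s = t * Real.log S := by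
        rw [htdef, Real.logb]
        field_simp
      rw [hlogr, hlogs]
      have h2k : t / 2 ≤ ((2^k : ℕ) : ℝ) := by
        push_cast
        linarith
      have hδeq : t * Real.log S * (-δ) = -(Real.log 2)/2 * (t/2) := by
        rw [hδdef]
        field_simp
        ring
      rw [hδeq]
      have hneg : -(Real.log 2)/2 ≤ 0 := by linarith
      exact mul_le_mul_of_nonpos_left h2k hneg
    calc Ψ s ≤ 3/4 * r ^ (2^k) := hΨle
      _ ≤ S ^ δ * s ^ (-δ) := by
          have hs0 : 0 < s ^ (-δ) := Real.rpow_pos_of_pos hs _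
          nlinarith [pow_pos hr0 (2^k)]
end

section
/- Let M, M₁, M₂, B be positive random variables such that M₁, M₂, B are mutually independent, M₁ and M₂ have the same distribution as M, all negative moments of B are finite, and M ≥ B(M₁ + M₂) almost surely. If E[M^{-q}] < ∞ for some q > 0, then E[M^{-2q}] < ∞. -/
open MeasureTheory ProbabilityTheory

/-- Bootstrapping negative moments: if `M ≥ B(M₁+M₂)` a.s. with `M₁, M₂, B`
mutually independent, `M₁, M₂` distributed as `M`, all negative moments of `B`
finite, and `E[M^(-q)] < ∞` for some `q > 0`, then `E[M^(-2q)] < ∞`. -/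
theorem negative_moment_bootstrap {Ω : Type*} [MeasurableSpace Ω]
    (μ : Measure Ω) [IsProbabilityMeasure μ]
    (M M₁ M₂ B : Ω → ℝ)
    (hM : Measurable M) (hM₁ : Measurable M₁) (hM₂ : Measurable M₂) (hB : Measurable B)
    (hMpos : ∀ᵐ ω ∂μ, 0 < M ω) (hM₁pos : ∀ᵐ ω ∂μ, 0 < M₁ ω)
    (hM₂pos : ∀ᵐ ω ∂μ, 0 < M₂ ω) (hBpos : ∀ᵐ ω ∂μ, 0 < B ω)
    (hindep : iIndepFun (m := fun _ : Fin 3 => (inferInstance : MeasurableSpace ℝ))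
      ![M₁, M₂, B] μ)
    (hid₁ : Measure.map M₁ μ = Measure.map M μ)
    (hid₂ : Measure.map M₂ μ = Measure.map M μ)
    (hBmom : ∀ r : ℝ, 0 < r → Integrable (fun ω => (B ω) ^ (-r)) μ)
    (hdom : ∀ᵐ ω ∂μ, B ω * (M₁ ω + M₂ ω) ≤ M ω)
    (q : ℝ) (hq : 0 < q)
    (hMq : Integrable (fun ω => (M ω) ^ (-q)) μ) :
    Integrable (fun ω => (M ω) ^ (-(2 * q))) μ := by
  -- measurability of x ↦ x ^ (-q)
  have hrpow : Measurable fun x : ℝ => x ^ (-q) := by measurability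
  have hrpow2 : Measurable fun x : ℝ => x ^ (-(2 * q)) := by measurability
  -- M₁^{-q}, M₂^{-q} integrable
  have hint : ∀ (N : Ω → ℝ), Measurable N → Measure.map N μ = Measure.map M μ →
      Integrable (fun ω => (N ω) ^ (-q)) μ := by
    intro N hN hid
    have h1 : Integrable (fun x : ℝ => x ^ (-q)) (Measure.map M μ) := by
      rw [integrable_map_measure hrpow.aestronglyMeasurable hM.aemeasurable]
      exact hMq
    rw [← hid, integrable_map_measure hrpow.aestronglyMeasurable hN.aemeasurable] at h1
    exact h1
  have hI₁ : Integrable (fun ω => (M₁ ω) ^ (-q)) μ := hint M₁ hM₁ hid₁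
  have hI₂ : Integrable (fun ω => (M₂ ω) ^ (-q)) μ := hint M₂ hM₂ hid₂
  have hmeas : ∀ i, Measurable (![M₁, M₂, B] i) := by
    intro i
    fin_cases i <;> simpa using ‹Measurable _›
  -- independence of M₁ and M₂
  have h12 : IndepFun M₁ M₂ μ := hindep.indepFun (show (0 : Fin 3) ≠ 1 by decide)
  have h12' : IndepFun (fun ω => (M₁ ω) ^ (-q)) (fun ω => (M₂ ω) ^ (-q)) μ :=
    h12.comp hrpow hrpow
  have hIP : Integrable (fun ω => (M₁ ω) ^ (-q) * (M₂ ω) ^ (-q)) μ :=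
    h12'.integrable_mul hI₁ hI₂
  -- independence of (M₁, M₂) and B
  have hpair : IndepFun (fun ω => (M₁ ω, M₂ ω)) B μ :=
    hindep.indepFun_prodMk hmeas 0 1 2 (by decide) (by decide)
  have hPB : IndepFun (fun ω => (M₁ ω) ^ (-q) * (M₂ ω) ^ (-q))
      (fun ω => (B ω) ^ (-(2 * q))) μ := by
    have hg : Measurable fun p : ℝ × ℝ => p.1 ^ (-q) * p.2 ^ (-q) :=
      (hrpow.comp measurable_fst).mul (hrpow.comp measurable_snd)
    exact hpair.comp hg hrpow2
  have hIB : Integrable (fun ω => (B ω) ^ (-(2 * q))) μ := hBmom (2 * q) (by linarith)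
  have hIprod : Integrable
      (fun ω => (M₁ ω) ^ (-q) * (M₂ ω) ^ (-q) * (B ω) ^ (-(2 * q))) μ :=
    hPB.integrable_mul hIP hIB
  have hIbound : Integrable
      (fun ω => (4 : ℝ) ^ (-q) *
        ((M₁ ω) ^ (-q) * (M₂ ω) ^ (-q) * (B ω) ^ (-(2 * q)))) μ :=
    hIprod.const_mul _
  refine hIbound.mono' ((hrpow2.comp hM).aestronglyMeasurable) ?_
  filter_upwards [hMpos, hM₁pos, hM₂pos, hBpos, hdom] with ω h0 h1 h2 hb hd
  have hsum : 0 < M₁ ω + M₂ ω := by linarith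
  have hBM : 0 < B ω * (M₁ ω + M₂ ω) := mul_pos hb hsum
  rw [Real.norm_eq_abs, abs_of_nonneg (Real.rpow_nonneg h0.le _)]
  -- step 1: M^{-2q} ≤ (B(M₁+M₂))^{-2q}
  have step1 : (M ω) ^ (-(2 * q)) ≤ (B ω * (M₁ ω + M₂ ω)) ^ (-(2 * q)) :=
    Real.rpow_le_rpow_of_nonpos hBM hd (by linarith)
  -- step 2: (B(M₁+M₂))^{-2q} = B^{-2q} * (M₁+M₂)^{-2q}
  have step2 : (B ω * (M₁ ω + M₂ ω)) ^ (-(2 * q))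
      = (B ω) ^ (-(2 * q)) * (M₁ ω + M₂ ω) ^ (-(2 * q)) :=
    Real.mul_rpow hb.le hsum.le
  -- step 3: (M₁+M₂)^{-2q} ≤ 4^{-q} * M₁^{-q} * M₂^{-q}
  have amgm : 4 * (M₁ ω * M₂ ω) ≤ (M₁ ω + M₂ ω) ^ (2 : ℕ) := by nlinarith [sq_nonneg (M₁ ω - M₂ ω)]
  have step3 : (M₁ ω + M₂ ω) ^ (-(2 * q)) ≤ (4 * (M₁ ω * M₂ ω)) ^ (-q) := by
    have h4 : 0 < 4 * (M₁ ω * M₂ ω) := by positivity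
    have : ((M₁ ω + M₂ ω) ^ (2 : ℕ)) ^ (-q) ≤ (4 * (M₁ ω * M₂ ω)) ^ (-q) :=
      Real.rpow_le_rpow_of_nonpos h4 amgm (by linarith)
    calc (M₁ ω + M₂ ω) ^ (-(2 * q))
        = ((M₁ ω + M₂ ω) ^ (2 : ℕ)) ^ (-q) := by
          rw [← Real.rpow_natCast (M₁ ω + M₂ ω) 2, ← Real.rpow_mul hsum.le]
          norm_num
      _ ≤ _ := this
  have expand : (4 * (M₁ ω * M₂ ω)) ^ (-q)
      = (4 : ℝ) ^ (-q) * ((M₁ ω) ^ (-q) * (M₂ ω) ^ (-q)) := by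
    rw [Real.mul_rpow (by norm_num) (by positivity), Real.mul_rpow h1.le h2.le]
  calc (M ω) ^ (-(2 * q))
      ≤ (B ω) ^ (-(2 * q)) * (M₁ ω + M₂ ω) ^ (-(2 * q)) := by rw [← step2]; exact step1
    _ ≤ (B ω) ^ (-(2 * q)) * ((4 : ℝ) ^ (-q) * ((M₁ ω) ^ (-q) * (M₂ ω) ^ (-q))) := by
        have hB2 : 0 ≤ (B ω) ^ (-(2 * q)) := Real.rpow_nonneg hb.le _
        exact mul_le_mul_of_nonneg_left (le_of_le_of_eq step3 expand) hB2
    _ = (4 : ℝ) ^ (-q) * ((M₁ ω) ^ (-q) * (M₂ ω) ^ (-q) * (B ω) ^ (-(2 * q))) := by ring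
end
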